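/- Let F be a stable class of closed sets of a Polish space (E,d), μ a Borel probability measure, 0 < α < 1, and τ : F → [0,∞] a function satisfying: for any sequence (A_n) ⊆ F, τ(lim_n A_n) ≤ liminf_n τ(A_n). Then there exists B ∈ F attaining the minimum of τ(A) over A ∈ F with μ(A) ≥ 1−α. -/

import Mathlib

open Set Metric Filter MeasureTheory ENNReal

def nbh {E : Type*} [MetricSpace E] (B : Set E) (ε : ℝ) : Set E :=
  {x | ∃ y ∈ B, dist x y < ε}

def setLim {E : Type*} [MetricSpace E] (B : ℕ → Set E) : Set E :=
  ⋂ ε > (0 : ℝ), ⋃ k : ℕ, ⋂ n, ⋂ _ : n ≥ k, nbh (B n) ε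

/-- A class of closed sets is stable if it contains the whole space and every
sequence in it admits a subsequence whose set-limit belongs to the class. -/
def StableClass {E : Type*} [MetricSpace E] (F : Set (Set E)) : Prop :=
  Set.univ ∈ F ∧
    ∀ B : ℕ → Set E, (∀ n, B n ∈ F) →
      ∃ φ : ℕ → ℕ, StrictMono φ ∧ setLim (B ∘ φ) ∈ F

theorem exists_minimizer
    {E : Type*} [MetricSpace E] [TopologicalSpace.SeparableSpace E] [CompleteSpace E]
    [MeasurableSpace E] [BorelSpace E]
    (μ : Measure E) [IsProbabilityMeasure μ]
    (F : Set (Set E)) (hFclosed : ∀ A ∈ F, IsClosed A) (hFstable : StableClass F)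
    (τ : Set E → ℝ≥0∞)
    (hlsc : ∀ A : ℕ → Set E, (∀ n, A n ∈ F) →
      τ (setLim A) ≤ Filter.liminf (fun n => τ (A n)) atTop)
    (α : ℝ) (hα0 : 0 < α) (hα1 : α < 1) :
    ∃ B ∈ F, ENNReal.ofReal (1 - α) ≤ μ B ∧
      ∀ A ∈ F, ENNReal.ofReal (1 - α) ≤ μ A → τ B ≤ τ A := by
  set ν : ℝ≥0∞ := ENNReal.ofReal (1 - α) with hν
  have hν1 : ν ≤ 1 := by
    rw [hν]
    calc ENNReal.ofReal (1 - α) ≤ ENNReal.ofReal 1 := by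
          exact ENNReal.ofReal_le_ofReal (by linarith)
      _ = 1 := ENNReal.ofReal_one
  -- the admissible class
  set S : Set (Set E) := {A | A ∈ F ∧ ν ≤ μ A} with hS
  have hunivS : (Set.univ : Set E) ∈ S := by
    refine ⟨hFstable.1, ?_⟩
    rw [measure_univ]; exact hν1
  -- the infimum
  set m : ℝ≥0∞ := sInf (τ '' S) with hm
  have hSim : (τ '' S).Nonempty := ⟨τ Set.univ, ⟨Set.univ, hunivS, rfl⟩⟩
  obtain ⟨u, -, hu_tendsto, hu_mem⟩ :=
    exists_seq_tendsto_sInf hSim (OrderBot.bddBelow _)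
  choose C hCS hτC using fun n => hu_mem n
  have hCF : ∀ n, C n ∈ F := fun n => (hCS n).1
  have hCμ : ∀ n, ν ≤ μ (C n) := fun n => (hCS n).2
  -- E is nonempty
  have hEne : Nonempty E := by
    rcases isEmpty_or_nonempty E with h | h
    · exfalso
      have : (Set.univ : Set E) = (∅ : Set E) := Set.univ_eq_empty_iff.mpr h
      have h1 : μ Set.univ = 1 := measure_univ
      rw [this, measure_empty] at h1
      exact zero_ne_one h1
    · exact h
  -- dense sequence
  set e : ℕ → E := TopologicalSpace.denseSeq E with he
  have hedense : DenseRange e := TopologicalSpace.denseRange_denseSeq E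
  -- diagonal extraction: make all distances to dense points converge
  obtain ⟨f, ψ, hψ, hfconv⟩ :=
    SeqCompactSpace.tendsto_subseq
      (fun n => (fun k => EMetric.infEdist (e k) (C n) : ℕ → ℝ≥0∞))
  have hconv : ∀ k, Tendsto (fun n => EMetric.infEdist (e k) (C (ψ n))) atTop (nhds (f k)) :=
    fun k => (tendsto_pi_nhds.1 hfconv) k
  -- the set of points approached by the subsequence
  set L0 : Set E := {x | liminf (fun n => EMetric.infEdist x (C (ψ n))) atTop = 0} with hL0
  have hL0tendsto : ∀ x ∈ L0,
      Tendsto (fun n => EMetric.infEdist x (C (ψ n))) atTop (nhds 0) := by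
    intro x hx
    rw [ENNReal.tendsto_nhds_zero]
    intro ε hε
    -- find a real δ > 0 with ofReal (4*δ) ≤ ε
    obtain ⟨c, hc0, hcε⟩ := exists_between hε
    have hcne : c ≠ ⊤ := hcε.trans_le le_top |>.ne
    set δ : ℝ := c.toReal / 4 with hδ
    have hδ0 : 0 < δ := by
      have : 0 < c.toReal := ENNReal.toReal_pos hc0.ne' hcne
      positivity
    have hsum : ENNReal.ofReal δ + ENNReal.ofReal δ + ENNReal.ofReal δ + ENNReal.ofReal δ ≤ ε := by
      have : ENNReal.ofReal δ + ENNReal.ofReal δ + ENNReal.ofReal δ + ENNReal.ofReal δ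
          = ENNReal.ofReal (δ + δ + δ + δ) := by
        rw [← ENNReal.ofReal_add hδ0.le hδ0.le, ← ENNReal.ofReal_add (by positivity) hδ0.le,
          ← ENNReal.ofReal_add (by positivity) hδ0.le]
      rw [this]
      have h4 : δ + δ + δ + δ = c.toReal := by rw [hδ]; ring
      rw [h4, ENNReal.ofReal_toReal hcne]
      exact hcε.le
    -- pick a dense point close to x
    obtain ⟨k, hk⟩ := (Metric.denseRange_iff.1 hedense) x δ hδ0
    have hxk : edist x (e k) < ENNReal.ofReal δ := edist_lt_ofReal.2 hk
    -- f k is small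
    have hfk : f k ≤ ENNReal.ofReal δ + ENNReal.ofReal δ := by
      have hfreq : ∃ᶠ n in atTop,
          EMetric.infEdist (e k) (C (ψ n)) ∈ Iic (ENNReal.ofReal δ + ENNReal.ofReal δ) := by
        have hx0 : liminf (fun n => EMetric.infEdist x (C (ψ n))) atTop = 0 := hx
        have hlt : liminf (fun n => EMetric.infEdist x (C (ψ n))) atTop
            < ENNReal.ofReal δ := by
          rw [hx0]; exact ENNReal.ofReal_pos.2 hδ0
        have h1 : ∃ᶠ n in atTop,
            EMetric.infEdist x (C (ψ n)) < ENNReal.ofReal δ :=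
          frequently_lt_of_liminf_lt (by isBoundedDefault) hlt
        refine h1.mono fun n hn => ?_
        have := EMetric.infEdist_le_infEdist_add_edist
          (x := e k) (y := x) (s := C (ψ n))
        refine le_trans this ?_
        rw [edist_comm]
        exact add_le_add hn.le hxk.le
      have := mem_closure_of_frequently_of_tendsto hfreq (hconv k)
      rwa [isClosed_Iic.closure_eq] at this
    have hfkne : f k ≠ ⊤ := by
      refine (hfk.trans_lt ?_).ne
      exact ENNReal.add_lt_top.2 ⟨ENNReal.ofReal_lt_top, ENNReal.ofReal_lt_top⟩
    -- eventually the dense point is close to the sets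
    have hev : ∀ᶠ n in atTop,
        EMetric.infEdist (e k) (C (ψ n)) < f k + ENNReal.ofReal δ :=
      Tendsto.eventually_lt_const
        (lt_add_right hfkne (ENNReal.ofReal_pos.2 hδ0).ne') (hconv k)
    refine hev.mono fun n hn => ?_
    have h1 : EMetric.infEdist x (C (ψ n))
        ≤ EMetric.infEdist (e k) (C (ψ n)) + edist x (e k) :=
      EMetric.infEdist_le_infEdist_add_edist
    calc EMetric.infEdist x (C (ψ n))
        ≤ EMetric.infEdist (e k) (C (ψ n)) + edist x (e k) := h1
      _ ≤ (f k + ENNReal.ofReal δ) + ENNReal.ofReal δ := add_le_add hn.le hxk.le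
      _ ≤ ((ENNReal.ofReal δ + ENNReal.ofReal δ) + ENNReal.ofReal δ) + ENNReal.ofReal δ := by
          gcongr
      _ ≤ ε := hsum
  -- L0 has large measure
  have hμL0 : ν ≤ μ L0 := by
    -- complement of L0 is contained in an eventual-escape set
    have hsub : L0ᶜ ⊆ ⋃ k : ℕ, ⋂ n, ⋂ _ : n ≥ k, (C (ψ n))ᶜ := by
      intro x hx
      have hpos : 0 < liminf (fun n => EMetric.infEdist x (C (ψ n))) atTop := by
        rcases eq_or_lt_of_le (zero_le : (0 : ℝ≥0∞) ≤ liminf (fun n => EMetric.infEdist x (C (ψ n))) atTop) with h | h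
        · exact absurd h.symm hx
        · exact h
      have hev := eventually_lt_of_lt_liminf hpos
      rw [eventually_atTop] at hev
      obtain ⟨k, hk⟩ := hev
      refine Set.mem_iUnion.2 ⟨k, ?_⟩
      refine Set.mem_iInter.2 fun n => Set.mem_iInter.2 fun hn => ?_
      intro hxC
      have := EMetric.infEdist_zero_of_mem hxC
      have h2 := hk n hn
      rw [show EMetric.infEdist x (C (ψ n)) = 0 from this] at h2
      exact lt_irrefl _ h2
    have hmeas : μ (⋃ k : ℕ, ⋂ n, ⋂ _ : n ≥ k, (C (ψ n))ᶜ) ≤ 1 - ν := by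
      have hdir : Directed (· ⊆ ·) (fun k : ℕ => ⋂ n, ⋂ _ : n ≥ k, (C (ψ n))ᶜ) := by
        refine (Monotone.directed_le ?_)
        intro a b hab
        refine Set.iInter_mono fun n => ?_
        exact Set.iInter_mono' fun h => ⟨le_trans hab h, subset_rfl⟩
      rw [hdir.measure_iUnion]
      refine iSup_le fun k => ?_
      have h1 : (⋂ n, ⋂ _ : n ≥ k, (C (ψ n))ᶜ) ⊆ (C (ψ k))ᶜ := by
        intro x hx
        exact (Set.mem_iInter.1 (Set.mem_iInter.1 hx k)) le_rfl
      calc μ (⋂ n, ⋂ _ : n ≥ k, (C (ψ n))ᶜ) ≤ μ (C (ψ k))ᶜ := measure_mono h1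
        _ = 1 - μ (C (ψ k)) :=
            prob_compl_eq_one_sub ((hFclosed _ (hCF (ψ k))).measurableSet)
        _ ≤ 1 - ν := tsub_le_tsub_left (hCμ (ψ k)) 1
    have hcompl : μ L0ᶜ ≤ 1 - ν := le_trans (measure_mono hsub) hmeas
    have h1 : (1 : ℝ≥0∞) ≤ μ L0 + μ L0ᶜ := by
      rw [← measure_univ (μ := μ)]
      calc μ Set.univ = μ (L0 ∪ L0ᶜ) := by rw [Set.union_compl_self]
        _ ≤ μ L0 + μ L0ᶜ := measure_union_le _ _
    have h2 : (1 : ℝ≥0∞) ≤ μ L0 + (1 - ν) := le_trans h1 (add_le_add_right hcompl _)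
    have h3 : 1 - (1 - ν) ≤ μ L0 := tsub_le_iff_right.2 h2
    rwa [ENNReal.sub_sub_cancel one_ne_top hν1] at h3
  -- apply stability
  obtain ⟨φ, hφ, hBF⟩ := hFstable.2 (C ∘ ψ) (fun n => hCF (ψ n))
  refine ⟨setLim ((C ∘ ψ) ∘ φ), hBF, ?_, ?_⟩
  · -- measure bound: L0 ⊆ setLim ((C ∘ ψ) ∘ φ)
    refine le_trans hμL0 (measure_mono ?_)
    intro x hx
    have htd : Tendsto (fun n => EMetric.infEdist x (C (ψ (φ n)))) atTop (nhds 0) :=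
      (hL0tendsto x hx).comp hφ.tendsto_atTop
    rw [setLim]
    refine Set.mem_iInter.2 fun ε => Set.mem_iInter.2 fun hε => ?_
    have hev : ∀ᶠ n in atTop,
        EMetric.infEdist x (C (ψ (φ n))) < ENNReal.ofReal ε := by
      have : ENNReal.ofReal ε > 0 := ENNReal.ofReal_pos.2 hε
      exact htd.eventually_lt_const this
    rw [eventually_atTop] at hev
    obtain ⟨k, hk⟩ := hev
    refine Set.mem_iUnion.2 ⟨k, ?_⟩
    refine Set.mem_iInter.2 fun n => Set.mem_iInter.2 fun hn => ?_
    obtain ⟨y, hy, hdy⟩ := EMetric.infEdist_lt_iff.1 (hk n hn)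
    exact ⟨y, hy, edist_lt_ofReal.1 hdy⟩
  · -- minimality
    intro A hAF hAμ
    have hτB : τ (setLim ((C ∘ ψ) ∘ φ)) ≤ m := by
      have h1 := hlsc ((C ∘ ψ) ∘ φ) (fun n => hCF (ψ (φ n)))
      have h2 : Tendsto (fun n => τ (((C ∘ ψ) ∘ φ) n)) atTop (nhds m) := by
        have h3 : Tendsto (fun n => u (ψ (φ n))) atTop (nhds m) :=
          hu_tendsto.comp ((hψ.comp hφ).tendsto_atTop)
        refine h3.congr fun n => ?_
        exact (hτC (ψ (φ n))).symm
      exact h1.trans (le_of_eq h2.liminf_eq)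
    refine le_trans hτB ?_
    exact sInf_le ⟨A, ⟨hAF, hAμ⟩, rfl⟩
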